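/- Let $\lambda_1\neq\lambda_2$ be nonzero reals. The function $\phi(r,\theta)=\phi_0(\theta)+Q_0\big(\frac{\lambda_2-\lambda_1}{\lambda_1\lambda_2}\log r+\frac{1}{\lambda_1}\log|\cos\theta|-\frac{1}{\lambda_2}\log|\sin\theta|\big)$, where $\phi_0(\theta)=\frac14\log(\lambda_1^2\cos^2\theta+\lambda_2^2\sin^2\theta)-\frac12\frac{\lambda_2\log|\cos\theta|-\lambda_1\log|\sin\theta|}{\lambda_2-\lambda_1}$ and $Q_0$ is any differentiable function of one variable, solves the linear PDE $2s_2(x)(\lambda_1 x_1\partial_1\phi+\lambda_2 x_2\partial_2\phi)=s_3(x)$ on the region $x_1x_2\neq 0$, where $x_1=r\cos\theta$, $x_2=r\sin\theta$, $s_k(x)=\lambda_1^k x_1^2+\lambda_2^k x_2^2$. -/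

import Mathlib

set_option maxHeartbeats 1000000

/-- let `λ₁ ≠ λ₂` be nonzero reals. The function
`φ(r,θ) = φ₀(θ) + Q₀((λ₂-λ₁)/(λ₁λ₂) log r + (1/λ₁) log|cos θ| - (1/λ₂) log|sin θ|)`, with
`φ₀(θ) = ¼ log(λ₁² cos²θ + λ₂² sin²θ) - ½ (λ₂ log|cos θ| - λ₁ log|sin θ|)/(λ₂-λ₁)` and `Q₀`
any differentiable function of one variable, solves the linear PDE
`2 s₂(x) (λ₁ x₁ ∂₁φ + λ₂ x₂ ∂₂φ) = s₃(x)` on the region `x₁ x₂ ≠ 0`, where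
`x₁ = r cos θ`, `x₂ = r sin θ` and `s_k(x) = λ₁^k x₁² + λ₂^k x₂²`. (Here the solution is
written in Cartesian coordinates via `r = √(x₁²+x₂²)`, `|cos θ| = |x₁|/r`,
`|sin θ| = |x₂|/r`.) -/
theorem strong_srrt_stmt15 (l1 l2 : ℝ) (h1 : l1 ≠ 0) (h2 : l2 ≠ 0) (hne : l1 ≠ l2)
    (Q0 : ℝ → ℝ) (hQ0 : Differentiable ℝ Q0)
    (Φ : ℝ × ℝ → ℝ)
    (hΦ : ∀ x : ℝ × ℝ, Φ x =
      (1/4) * Real.log ((l1 ^ 2 * x.1 ^ 2 + l2 ^ 2 * x.2 ^ 2) / (x.1 ^ 2 + x.2 ^ 2))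
      - (1/2) * (l2 * Real.log (|x.1| / Real.sqrt (x.1 ^ 2 + x.2 ^ 2))
                 - l1 * Real.log (|x.2| / Real.sqrt (x.1 ^ 2 + x.2 ^ 2))) / (l2 - l1)
      + Q0 ((l2 - l1) / (l1 * l2) * Real.log (Real.sqrt (x.1 ^ 2 + x.2 ^ 2))
            + (1 / l1) * Real.log (|x.1| / Real.sqrt (x.1 ^ 2 + x.2 ^ 2))
            - (1 / l2) * Real.log (|x.2| / Real.sqrt (x.1 ^ 2 + x.2 ^ 2)))) :
    ∀ x : ℝ × ℝ, x.1 ≠ 0 → x.2 ≠ 0 →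
      2 * (l1 ^ 2 * x.1 ^ 2 + l2 ^ 2 * x.2 ^ 2) *
          (l1 * x.1 * fderiv ℝ Φ x (1, 0) + l2 * x.2 * fderiv ℝ Φ x (0, 1))
        = l1 ^ 3 * x.1 ^ 2 + l2 ^ 3 * x.2 ^ 2 := by
  intro x hx1 hx2
  have hsub : l2 - l1 ≠ 0 := sub_ne_zero.mpr (Ne.symm hne)
  -- the simplified function
  set Ψ : ℝ × ℝ → ℝ := fun p =>
    (1/4) * Real.log (l1 ^ 2 * p.1 ^ 2 + l2 ^ 2 * p.2 ^ 2)
    - (1/2) * (l2 * Real.log p.1 - l1 * Real.log p.2) / (l2 - l1)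
    + Q0 ((1 / l1) * Real.log p.1 - (1 / l2) * Real.log p.2) with hΨ
  -- Φ = Ψ on a neighborhood of x
  have hU : IsOpen {p : ℝ × ℝ | p.1 ≠ 0 ∧ p.2 ≠ 0} := by
    have : {p : ℝ × ℝ | p.1 ≠ 0 ∧ p.2 ≠ 0}
        = (Prod.fst ⁻¹' {(0:ℝ)}ᶜ) ∩ (Prod.snd ⁻¹' {(0:ℝ)}ᶜ) := by
      ext p; simp [Set.mem_setOf_eq]
    rw [this]
    exact (isOpen_compl_singleton.preimage continuous_fst).inter
      (isOpen_compl_singleton.preimage continuous_snd)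
  have heq : ∀ p : ℝ × ℝ, p.1 ≠ 0 → p.2 ≠ 0 → Φ p = Ψ p := by
    intro p hp1 hp2
    have hB : p.1 ^ 2 + p.2 ^ 2 > 0 := by positivity
    have hA : l1 ^ 2 * p.1 ^ 2 + l2 ^ 2 * p.2 ^ 2 > 0 := by positivity
    have hsq : Real.log (Real.sqrt (p.1 ^ 2 + p.2 ^ 2))
        = (1/2) * Real.log (p.1 ^ 2 + p.2 ^ 2) := by
      rw [Real.log_sqrt hB.le]; ring
    have h1p : Real.log (|p.1| / Real.sqrt (p.1 ^ 2 + p.2 ^ 2))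
        = Real.log p.1 - (1/2) * Real.log (p.1 ^ 2 + p.2 ^ 2) := by
      rw [Real.log_div (abs_ne_zero.mpr hp1) (Real.sqrt_ne_zero'.mpr hB),
        Real.log_abs, Real.log_sqrt hB.le]; ring
    have h2p : Real.log (|p.2| / Real.sqrt (p.1 ^ 2 + p.2 ^ 2))
        = Real.log p.2 - (1/2) * Real.log (p.1 ^ 2 + p.2 ^ 2) := by
      rw [Real.log_div (abs_ne_zero.mpr hp2) (Real.sqrt_ne_zero'.mpr hB),
        Real.log_abs, Real.log_sqrt hB.le]; ring
    have hAB : Real.log ((l1 ^ 2 * p.1 ^ 2 + l2 ^ 2 * p.2 ^ 2) / (p.1 ^ 2 + p.2 ^ 2))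
        = Real.log (l1 ^ 2 * p.1 ^ 2 + l2 ^ 2 * p.2 ^ 2) - Real.log (p.1 ^ 2 + p.2 ^ 2) :=
      Real.log_div hA.ne' hB.ne'
    rw [hΦ p, hΨ, hAB, h1p, h2p, hsq]
    have harg : (l2 - l1) / (l1 * l2) * ((1/2) * Real.log (p.1 ^ 2 + p.2 ^ 2))
          + (1 / l1) * (Real.log p.1 - (1/2) * Real.log (p.1 ^ 2 + p.2 ^ 2))
          - (1 / l2) * (Real.log p.2 - (1/2) * Real.log (p.1 ^ 2 + p.2 ^ 2))
        = (1 / l1) * Real.log p.1 - (1 / l2) * Real.log p.2 := by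
      field_simp; ring
    rw [harg]
    field_simp
    ring
  have hmem : {p : ℝ × ℝ | p.1 ≠ 0 ∧ p.2 ≠ 0} ∈ nhds x :=
    hU.mem_nhds ⟨hx1, hx2⟩
  have hev : Φ =ᶠ[nhds x] Ψ :=
    Filter.eventuallyEq_of_mem hmem (fun p hp => heq p hp.1 hp.2)
  -- derivative of Ψ at x
  have hA : l1 ^ 2 * x.1 ^ 2 + l2 ^ 2 * x.2 ^ 2 > 0 := by positivity
  set F := ContinuousLinearMap.fst ℝ ℝ ℝ with hF
  set S := ContinuousLinearMap.snd ℝ ℝ ℝ with hS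
  have hdA : HasFDerivAt (fun p : ℝ × ℝ => l1 ^ 2 * p.1 ^ 2 + l2 ^ 2 * p.2 ^ 2)
      ((l1 ^ 2 * (2 * x.1)) • F + (l2 ^ 2 * (2 * x.2)) • S) x := by
    have hp1 : HasFDerivAt (fun p : ℝ × ℝ => p.1 ^ 2) ((2 * x.1) • F) x := by
      simpa [Function.comp_def] using (hasDerivAt_pow 2 x.1).comp_hasFDerivAt x (hasFDerivAt_fst (𝕜 := ℝ) (p := x))
    have hp2 : HasFDerivAt (fun p : ℝ × ℝ => p.2 ^ 2) ((2 * x.2) • S) x := by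
      simpa [Function.comp_def] using (hasDerivAt_pow 2 x.2).comp_hasFDerivAt x (hasFDerivAt_snd (𝕜 := ℝ) (p := x))
    have := (hp1.const_mul (l1 ^ 2)).add (hp2.const_mul (l2 ^ 2))
    simpa [smul_smul, mul_comm, mul_assoc, mul_left_comm, Pi.add_def] using this
  have hdlogA : HasFDerivAt (fun p : ℝ × ℝ => Real.log (l1 ^ 2 * p.1 ^ 2 + l2 ^ 2 * p.2 ^ 2))
      ((l1 ^ 2 * x.1 ^ 2 + l2 ^ 2 * x.2 ^ 2)⁻¹ • ((l1 ^ 2 * (2 * x.1)) • F + (l2 ^ 2 * (2 * x.2)) • S)) x :=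
    hdA.log hA.ne'
  have hdlog1 : HasFDerivAt (fun p : ℝ × ℝ => Real.log p.1) (x.1⁻¹ • F) x :=
    (hasFDerivAt_fst (𝕜 := ℝ) (p := x)).log hx1
  have hdlog2 : HasFDerivAt (fun p : ℝ × ℝ => Real.log p.2) (x.2⁻¹ • S) x :=
    (hasFDerivAt_snd (𝕜 := ℝ) (p := x)).log hx2
  have hdw : HasFDerivAt (fun p : ℝ × ℝ => (1 / l1) * Real.log p.1 - (1 / l2) * Real.log p.2)
      ((1 / l1) • (x.1⁻¹ • F) - (1 / l2) • (x.2⁻¹ • S)) x :=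
    (hdlog1.const_mul (1 / l1)).sub (hdlog2.const_mul (1 / l2))
  set w : ℝ := (1 / l1) * Real.log x.1 - (1 / l2) * Real.log x.2 with hw
  have hdQ : HasFDerivAt (fun p : ℝ × ℝ => Q0 ((1 / l1) * Real.log p.1 - (1 / l2) * Real.log p.2))
      ((deriv Q0 w) • ((1 / l1) • (x.1⁻¹ • F) - (1 / l2) • (x.2⁻¹ • S))) x :=
    ((hQ0 w).hasDerivAt.comp_hasFDerivAt x hdw)
  have hdΨ : HasFDerivAt Ψ
      ((1/4 : ℝ) • ((l1 ^ 2 * x.1 ^ 2 + l2 ^ 2 * x.2 ^ 2)⁻¹ • ((l1 ^ 2 * (2 * x.1)) • F + (l2 ^ 2 * (2 * x.2)) • S))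
       - ((1/2/(l2 - l1) : ℝ)) • (l2 • (x.1⁻¹ • F) - l1 • (x.2⁻¹ • S))
       + (deriv Q0 w) • ((1 / l1) • (x.1⁻¹ • F) - (1 / l2) • (x.2⁻¹ • S))) x := by
    have hmid : HasFDerivAt (fun p : ℝ × ℝ =>
        (1/2) * (l2 * Real.log p.1 - l1 * Real.log p.2) / (l2 - l1))
        (((1/2/(l2 - l1) : ℝ)) • (l2 • (x.1⁻¹ • F) - l1 • (x.2⁻¹ • S))) x := by
      have := ((hdlog1.const_mul l2).sub (hdlog2.const_mul l1)).const_mul ((1/2) / (l2 - l1))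
      have heqf : (fun p : ℝ × ℝ => (1/2) / (l2 - l1) * (l2 * Real.log p.1 - l1 * Real.log p.2))
          = (fun p : ℝ × ℝ => (1/2) * (l2 * Real.log p.1 - l1 * Real.log p.2) / (l2 - l1)) := by
        funext p; ring
      simp only [Pi.sub_apply] at this
      rw [heqf] at this
      exact this
    exact ((hdlogA.const_mul (1/4)).sub hmid).add hdQ
  have hdΦ : fderiv ℝ Φ x = ((1/4 : ℝ) • ((l1 ^ 2 * x.1 ^ 2 + l2 ^ 2 * x.2 ^ 2)⁻¹ • ((l1 ^ 2 * (2 * x.1)) • F + (l2 ^ 2 * (2 * x.2)) • S))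
       - ((1/2/(l2 - l1) : ℝ)) • (l2 • (x.1⁻¹ • F) - l1 • (x.2⁻¹ • S))
       + (deriv Q0 w) • ((1 / l1) • (x.1⁻¹ • F) - (1 / l2) • (x.2⁻¹ • S))) :=
    (hdΨ.congr_of_eventuallyEq hev).fderiv
  rw [hdΦ]
  simp only [ContinuousLinearMap.add_apply, ContinuousLinearMap.sub_apply,
    ContinuousLinearMap.smul_apply, hF, hS, ContinuousLinearMap.coe_fst',
    ContinuousLinearMap.coe_snd', smul_eq_mul]
  field_simp
  ring
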